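/- Let A be a bounded self-adjoint operator on ℓ²(V) given by a d-regular graph adjacency structure: A has matrix entries in {0,1}, each row having exactly d ones, and operator norm ρ. Then for every finite S ⊆ V, the set N(S) of vertices adjacent to S satisfies |N(S)| ≥ (d/ρ)²·|S|; in particular the graph is a c-expander with 1 + c = d²/ρ². -/
import Mathlib


open scoped Classical
open RealInnerProductSpace

/-- A `d`-regular graph whose adjacency operator on `ℓ²(V)` is bounded
self-adjoint with norm `ρ` satisfies the vertex expansion
`|N(S)| ≥ (d/ρ)² |S|` for every finite `S`; i.e., it is a `c`-expander with
`1 + c = d²/ρ²`. -/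
theorem stmt19 {V : Type*} [DecidableEq V]
    (G : SimpleGraph V) [∀ v, Fintype (G.neighborSet v)]
    (d : ℕ) (hd : 0 < d) (hreg : ∀ v, G.degree v = d)
    (A : lp (fun _ : V => ℝ) 2 →L[ℝ] lp (fun _ : V => ℝ) 2)
    (hsa : ∀ f g : lp (fun _ : V => ℝ) 2, ⟪A f, g⟫ = ⟪f, A g⟫)
    (hentries : ∀ u v : V,
      (A (lp.single 2 u (1 : ℝ))) v = if G.Adj u v then (1 : ℝ) else 0)
    (ρ : ℝ) (hρpos : 0 < ρ) (hρ : ‖A‖ = ρ) :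
    ∀ S : Finset V,
      ((d : ℝ) / ρ) ^ 2 * S.card ≤
        ((S.biUnion fun s => G.neighborFinset s).card : ℝ) := by
  intro S
  set N : Finset V := S.biUnion fun s => G.neighborFinset s with hN
  -- indicator of S
  set f : lp (fun _ : V => ℝ) 2 := ∑ s ∈ S, lp.single 2 s (1 : ℝ) with hf
  have hfv : ∀ v : V, f v = if v ∈ S then (1 : ℝ) else 0 := by
    intro v
    simp only [hf, lp.coeFn_sum, Finset.sum_apply, lp.single_apply]
    simp [Finset.sum_ite_eq S v (fun _ => (1:ℝ))]
  -- ‖f‖² = |S|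
  have hfnorm : ‖f‖ ^ 2 = (S.card : ℝ) := by
    have : ⟪f, f⟫ = (S.card : ℝ) := by
      rw [hf, sum_inner]
      have : ∀ s ∈ S, ⟪lp.single 2 s (1 : ℝ), f⟫ = 1 := by
        intro s hs
        rw [lp.inner_single_left]
        simp [hfv s, hs]
      rw [Finset.sum_congr rfl this]
      simp
    rw [← real_inner_self_eq_norm_sq, this]
  -- entries of A f
  have hAfv : ∀ v : V, (A f) v = ∑ s ∈ S, (if G.Adj s v then (1 : ℝ) else 0) := by
    intro v
    rw [hf, map_sum, lp.coeFn_sum, Finset.sum_apply]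
    exact Finset.sum_congr rfl fun s _ => hentries s v
  have hAfnonneg : ∀ v : V, 0 ≤ (A f) v := by
    intro v; rw [hAfv]; positivity
  -- sum of A f over N is d * |S|
  have hsum : ∑ v ∈ N, (A f) v = (d : ℝ) * S.card := by
    have : ∑ v ∈ N, (A f) v
        = ∑ s ∈ S, ∑ v ∈ N, (if G.Adj s v then (1 : ℝ) else 0) := by
      rw [Finset.sum_comm]
      exact Finset.sum_congr rfl fun v _ => hAfv v
    rw [this]
    have hrow : ∀ s ∈ S, ∑ v ∈ N, (if G.Adj s v then (1 : ℝ) else 0) = (d : ℝ) := by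
      intro s hs
      have hsub : G.neighborFinset s ⊆ N := fun v hv =>
        Finset.mem_biUnion.2 ⟨s, hs, hv⟩
      rw [← Finset.sum_filter]
      have : N.filter (fun v => G.Adj s v) = G.neighborFinset s := by
        ext v
        simp only [Finset.mem_filter, SimpleGraph.mem_neighborFinset]
        exact ⟨fun h => h.2, fun h => ⟨hsub ((SimpleGraph.mem_neighborFinset G s v).2 h), h⟩⟩
      rw [this]
      simp [SimpleGraph.card_neighborFinset_eq_degree, hreg s]
    rw [Finset.sum_congr rfl hrow]
    simp [mul_comm]
  -- finset sum of squares ≤ ‖A f‖²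
  have hsq : ∑ v ∈ N, ((A f) v) ^ 2 ≤ ‖A f‖ ^ 2 := by
    have h2 : (0 : ℝ) < (2 : ENNReal).toReal := by norm_num
    have hs := lp.hasSum_norm h2 (A f)
    have hle : ∑ v ∈ N, ‖(A f) v‖ ^ ((2 : ENNReal).toReal) ≤ ‖A f‖ ^ ((2 : ENNReal).toReal) :=
      sum_le_hasSum N (fun v _ => Real.rpow_nonneg (norm_nonneg _) _) hs
    have h2' : ((2 : ENNReal).toReal) = ((2 : ℕ) : ℝ) := by norm_num
    have hpow : ∀ x : ℝ, ‖x‖ ^ ((2 : ENNReal).toReal) = x ^ 2 := fun x => by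
      rw [h2', Real.rpow_natCast, Real.norm_eq_abs, sq_abs]
    have hpow2 : ‖A f‖ ^ ((2 : ENNReal).toReal) = ‖A f‖ ^ 2 := by
      rw [h2', Real.rpow_natCast]
    calc ∑ v ∈ N, ((A f) v) ^ 2 = ∑ v ∈ N, ‖(A f) v‖ ^ ((2 : ENNReal).toReal) :=
          Finset.sum_congr rfl fun v _ => (hpow _).symm
      _ ≤ ‖A f‖ ^ ((2 : ENNReal).toReal) := hle
      _ = ‖A f‖ ^ 2 := hpow2
  -- operator norm bound
  have hopnorm : ‖A f‖ ^ 2 ≤ ρ ^ 2 * S.card := by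
    have h1 : ‖A f‖ ≤ ρ * ‖f‖ := by
      rw [← hρ]; exact A.le_opNorm f
    calc ‖A f‖ ^ 2 ≤ (ρ * ‖f‖) ^ 2 := by
          apply pow_le_pow_left₀ (norm_nonneg _) h1
      _ = ρ ^ 2 * ‖f‖ ^ 2 := by ring
      _ = ρ ^ 2 * S.card := by rw [hfnorm]
  -- Cauchy–Schwarz
  have hCS : ((d : ℝ) * S.card) ^ 2 ≤ (N.card : ℝ) * (ρ ^ 2 * S.card) := by
    calc ((d : ℝ) * S.card) ^ 2 = (∑ v ∈ N, (A f) v) ^ 2 := by rw [hsum]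
      _ ≤ (N.card : ℝ) * ∑ v ∈ N, ((A f) v) ^ 2 := by
          exact_mod_cast sq_sum_le_card_mul_sum_sq (s := N) (f := fun v => (A f) v)
      _ ≤ (N.card : ℝ) * (ρ ^ 2 * S.card) := by
          exact mul_le_mul_of_nonneg_left (hsq.trans hopnorm) (Nat.cast_nonneg _)
  rcases Finset.eq_empty_or_nonempty S with rfl | hSne
  · simp
  have hScard : (0 : ℝ) < S.card := by exact_mod_cast Finset.card_pos.2 hSne
  have hρ2 : (0 : ℝ) < ρ ^ 2 := by positivity
  rw [div_pow]
  rw [div_mul_eq_mul_div, div_le_iff₀ hρ2]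
  have : ((d : ℝ) ^ 2 * S.card) * S.card ≤ ((N.card : ℝ) * ρ ^ 2) * S.card := by
    calc ((d : ℝ) ^ 2 * S.card) * S.card = ((d : ℝ) * S.card) ^ 2 := by ring
      _ ≤ (N.card : ℝ) * (ρ ^ 2 * S.card) := hCS
      _ = ((N.card : ℝ) * ρ ^ 2) * S.card := by ring
  exact le_of_mul_le_mul_right this hScard
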